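/- Let (X, H) be a hypothesis class. The following are equivalent: (1) for every ε with 0 < ε < 1/2 there is a constant c = c(ε) > 0 such that every finite nonempty A ⊆ H contains a subset B with |B| ≥ c|A| which is ε-good; (2) for some ε with 0 < ε < 1/2 and some constant c > 0, every finite nonempty A ⊆ H contains a subset B with |B| ≥ c|A| which is ε-good; (3) H is a Littlestone class; (4) for every ε with 0 < ε < 1/2 there is a constant c = c(ε) > 0 such that every finite nonempty A ⊆ X contains a subset B with |B| ≥ c|A| which is ε-good; (5) for some ε with 0 < ε < 1/2 and some constant c > 0, every finite nonempty A ⊆ X contains a subset B with |B| ≥ c|A| which is ε-good. -/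

import Mathlib

open scoped Classical

/-- `h` realizes the branch `y` in the binary tree with node labels given by `t`
(the node reached by the bit string `s` is labeled `t s`). -/
def Realizes {X : Type*} (t : List Bool → X) (h : X → Bool) (y : List Bool) : Prop :=
  ∀ i : Fin y.length, h (t (y.take i)) = y.get i

/-- `H` shatters some complete binary mistake tree of depth `d`. -/
def Shatters {X : Type*} (H : Set (X → Bool)) (d : ℕ) : Prop :=
  ∃ t : List Bool → X, ∀ y : List Bool, y.length = d → ∃ h ∈ H, Realizes t h y

/-- Littlestone dimension: supremum of depths of shattered mistake trees
(`⊥` for the empty class, `⊤` if unbounded). -/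
noncomputable def Ldim {X : Type*} (H : Set (X → Bool)) : WithBot ℕ∞ :=
  sSup {d : WithBot ℕ∞ | ∃ n : ℕ, Shatters H n ∧ d = ((n : ℕ∞) : WithBot ℕ∞)}

/-- A finite set `A` of hypotheses is ε-good: every point `x` splits it ε-unevenly. -/
def EpsGoodH {X : Type*} (ε : ℝ) (A : Finset (X → Bool)) : Prop :=
  ∀ x : X, ((A.filter fun h => h x = true).card : ℝ) < ε * A.card ∨
           ((A.filter fun h => h x = false).card : ℝ) < ε * A.card

/-- A finite set `B ⊆ X` is ε-good w.r.t. the class `H`. -/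
def EpsGoodX {X : Type*} (H : Set (X → Bool)) (ε : ℝ) (B : Finset X) : Prop :=
  ∀ h ∈ H, ((B.filter fun b => h b = true).card : ℝ) < ε * B.card ∨
           ((B.filter fun b => h b = false).card : ℝ) < ε * B.card

section Abstract

variable {α β : Type*}

/-- Abstract shattered tree of depth `n` for relation `R`, with realizers satisfying `C`
and node labels satisfying `P`. -/
def STree (R : α → β → Bool) (C : α → Prop) (P : β → Prop) (n : ℕ) : Prop :=
  ∃ t : List Bool → β, (∀ s : List Bool, s.length < n → P (t s)) ∧
    ∀ y : List Bool, y.length = n →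
      ∃ a, C a ∧ ∀ i : Fin y.length, R a (t (y.take i)) = y.get i

theorem STree.mono_class {R : α → β → Bool} {C C' : α → Prop} {P : β → Prop} {n : ℕ}
    (hCC : ∀ a, C a → C' a) (h : STree R C P n) : STree R C' P n := by
  obtain ⟨t, hn, hr⟩ := h
  exact ⟨t, hn, fun y hy => by obtain ⟨a, ha, hra⟩ := hr y hy; exact ⟨a, hCC a ha, hra⟩⟩

theorem STree.mono_depth {R : α → β → Bool} {C : α → Prop} {P : β → Prop} {m n : ℕ}
    (hmn : m ≤ n) (h : STree R C P n) : STree R C P m := by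
  obtain ⟨t, hn, hr⟩ := h
  refine ⟨t, fun s hs => hn s (lt_of_lt_of_le hs hmn), fun y hy => ?_⟩
  obtain ⟨a, ha, hra⟩ := hr (y ++ List.replicate (n - m) false) (by simp [hy, Nat.add_sub_cancel' hmn])
  refine ⟨a, ha, fun i => ?_⟩
  have hi : (i : ℕ) < y.length := i.isLt
  have h1 : (y ++ List.replicate (n - m) false).take (i : ℕ) = y.take (i : ℕ) :=
    List.take_append_of_le_length (le_of_lt hi)
  have h2 := hra ⟨(i : ℕ), by simp [hy]; omega⟩
  simpa [h1, List.getElem_append_left hi] using h2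

theorem STree.nonempty {R : α → β → Bool} {C : α → Prop} {P : β → Prop} {n : ℕ}
    (h : STree R C P n) : ∃ a, C a := by
  obtain ⟨t, _, hr⟩ := h
  obtain ⟨a, ha, _⟩ := hr (List.replicate n false) (by simp)
  exact ⟨a, ha⟩

theorem STree.zero {R : α → β → Bool} {C : α → Prop} {P : β → Prop}
    (b₀ : β) (h : ∃ a, C a) : STree R C P 0 := by
  obtain ⟨a, ha⟩ := h
  exact ⟨fun _ => b₀, fun s hs => absurd hs (by omega), fun y hy =>
    ⟨a, ha, fun i => absurd i.isLt (by simp [hy])⟩⟩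

/-- Root decomposition. -/
theorem STree.root {R : α → β → Bool} {C : α → Prop} {P : β → Prop} {n : ℕ}
    (h : STree R C P (n + 1)) :
    ∃ p : β, P p ∧ ∀ b : Bool,
      STree R (fun a => C a ∧ R a p = b) P n := by
  obtain ⟨t, hn, hr⟩ := h
  refine ⟨t [], hn [] (by simp), fun b => ⟨fun s => t (b :: s), ?_, ?_⟩⟩
  · intro s hs; exact hn (b :: s) (by simpa using hs)
  · intro y hy
    obtain ⟨a, ha, hra⟩ := hr (b :: y) (by simp [hy])
    refine ⟨a, ⟨ha, ?_⟩, fun i => ?_⟩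
    · have := hra ⟨0, by simp⟩
      simpa using this
    · have := hra ⟨(i : ℕ) + 1, by simp [hy]; omega⟩
      simpa [List.take_succ_cons] using this

/-- Gluing two trees at a root point. -/
theorem STree.glue {R : α → β → Bool} {C : α → Prop} {P : β → Prop} {n : ℕ} {p : β}
    (hp : P p)
    (h0 : STree R (fun a => C a ∧ R a p = false) P n)
    (h1 : STree R (fun a => C a ∧ R a p = true) P n) :
    STree R C P (n + 1) := by
  obtain ⟨t0, hn0, hr0⟩ := h0
  obtain ⟨t1, hn1, hr1⟩ := h1
  refine ⟨fun s => match s with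
    | [] => p
    | (b :: s) => if b then t1 s else t0 s, ?_, ?_⟩
  · intro s hs
    match s with
    | [] => exact hp
    | (b :: s) =>
      cases b
      · simpa using hn0 s (by simpa using hs)
      · simpa using hn1 s (by simpa using hs)
  · intro y hy
    match y with
    | [] => simp at hy
    | (b :: y') =>
      have hy' : y'.length = n := by simpa using hy
      cases b
      · obtain ⟨a, ⟨ha, hap⟩, hra⟩ := hr0 y' hy'
        refine ⟨a, ha, fun i => ?_⟩
        match i with
        | ⟨0, _⟩ => simpa using hap
        | ⟨j + 1, hj⟩ =>
          have := hra ⟨j, by simp at hj ⊢; omega⟩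
          simpa [List.take_succ_cons] using this
      · obtain ⟨a, ⟨ha, hap⟩, hra⟩ := hr1 y' hy'
        refine ⟨a, ha, fun i => ?_⟩
        match i with
        | ⟨0, _⟩ => simpa using hap
        | ⟨j + 1, hj⟩ =>
          have := hra ⟨j, by simp at hj ⊢; omega⟩
          simpa [List.take_succ_cons] using this

/-- A depth-1 tree from a splitting point. -/
theorem STree.one {R : α → β → Bool} {C : α → Prop} {P : β → Prop} (p : β) (hp : P p)
    (h0 : ∃ a, C a ∧ R a p = false) (h1 : ∃ a, C a ∧ R a p = true) :
    STree R C P 1 := by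
  refine ⟨fun _ => p, fun s hs => hp, fun y hy => ?_⟩
  match y, hy with
  | [b], _ =>
    rcases b with _ | _
    · obtain ⟨a, ha, hra⟩ := h0
      exact ⟨a, ha, fun i => by
        match i with
        | ⟨0, _⟩ => simpa using hra⟩
    · obtain ⟨a, ha, hra⟩ := h1
      exact ⟨a, ha, fun i => by
        match i with
        | ⟨0, _⟩ => simpa using hra⟩

theorem STree.extract_aux {R : α → β → Bool} (g : α) :
    ∀ (k : ℕ) (C : α → Prop) (P : β → Prop) (n₀ n₁ : ℕ), n₀ + n₁ ≤ k →
    STree R C P (n₀ + n₁ + 1) →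
    STree R C (fun b => P b ∧ R g b = false) n₀ ∨
    STree R C (fun b => P b ∧ R g b = true) n₁ := by
  intro k
  induction k with
  | zero =>
    intro C P n₀ n₁ hk h
    have h1 : n₀ = 0 := by omega
    have h2 : n₁ = 0 := by omega
    subst h1; subst h2
    obtain ⟨p, hp, hsub⟩ := h.root
    exact Or.inl (STree.zero p (((hsub false).nonempty).imp (fun a ha => ha.1)))
  | succ k ih =>
    intro C P n₀ n₁ hk h
    obtain ⟨p, hp, hsub⟩ := h.root
    cases hc : R g p
    · rcases Nat.eq_zero_or_pos n₀ with h1 | h1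
      · subst h1
        exact Or.inl (STree.zero p (((hsub false).nonempty).imp (fun a ha => ha.1)))
      · have key : ∀ b : Bool,
            STree R (fun a => C a ∧ R a p = b) (fun q => P q ∧ R g q = false) (n₀ - 1) ∨
            STree R C (fun q => P q ∧ R g q = true) n₁ := by
          intro b
          have hb' := (hsub b).mono_depth (show (n₀ - 1) + n₁ + 1 ≤ n₀ + n₁ by omega)
          rcases ih (fun a => C a ∧ R a p = b) P (n₀ - 1) n₁ (by omega) hb' with hl | hr
          · exact Or.inl hl
          · exact Or.inr (hr.mono_class (fun a ha => ha.1))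
        rcases key false with h0 | hr
        · rcases key true with h1 | hr
          · exact Or.inl ((STree.glue (p := p) ⟨hp, hc⟩ h0 h1).mono_depth
              (show n₀ ≤ n₀ - 1 + 1 by omega))
          · exact Or.inr hr
        · exact Or.inr hr
    · rcases Nat.eq_zero_or_pos n₁ with h1 | h1
      · subst h1
        exact Or.inr (STree.zero p (((hsub false).nonempty).imp (fun a ha => ha.1)))
      · have key : ∀ b : Bool,
            STree R (fun a => C a ∧ R a p = b) (fun q => P q ∧ R g q = true) (n₁ - 1) ∨
            STree R C (fun q => P q ∧ R g q = false) n₀ := by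
          intro b
          have hb' := (hsub b).mono_depth (show n₀ + (n₁ - 1) + 1 ≤ n₀ + n₁ by omega)
          rcases ih (fun a => C a ∧ R a p = b) P n₀ (n₁ - 1) (by omega) hb' with hl | hr
          · exact Or.inr (hl.mono_class (fun a ha => ha.1))
          · exact Or.inl hr
        rcases key false with h0 | hr
        · rcases key true with h1 | hr
          · exact Or.inr ((STree.glue (p := p) ⟨hp, hc⟩ h0 h1).mono_depth
              (show n₁ ≤ n₁ - 1 + 1 by omega))
          · exact Or.inl hr
        · exact Or.inl hr

theorem STree.extract {R : α → β → Bool} {C : α → Prop} {P : β → Prop} (g : α) {n₀ n₁ : ℕ}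
    (h : STree R C P (n₀ + n₁ + 1)) :
    STree R C (fun b => P b ∧ R g b = false) n₀ ∨
    STree R C (fun b => P b ∧ R g b = true) n₁ :=
  STree.extract_aux g (n₀ + n₁) C P n₀ n₁ le_rfl h

/-- One step of the threshold-building recursion. -/
theorem STree.step {R : α → β → Bool} {C : α → Prop} {P : β → Prop} {m : ℕ}
    (h : STree R C P (2 * m + 3)) :
    ∃ (x : β) (a : α) (v : Bool), P x ∧ C a ∧ R a x = v ∧
      STree R (fun a' => C a' ∧ R a' x = !v) (fun b => P b ∧ R a b = v) m := by
  have h' : STree R C P ((2 * m + 2) + 1) := h.mono_depth (by omega)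
  obtain ⟨p, hp, hsub⟩ := h'.root
  obtain ⟨ap, hap⟩ := (hsub true).nonempty
  have hf : STree R (fun a => C a ∧ R a p = false) P ((m + 1) + m + 1) :=
    (hsub false).mono_depth (by omega)
  rcases hf.extract ap with hZ | hS
  · obtain ⟨am, ham⟩ := (hsub false).nonempty
    have ht : STree R (fun a => C a ∧ R a p = true) P (m + (m + 1) + 1) :=
      (hsub true).mono_depth (by omega)
    rcases ht.extract am with hS | hW
    · refine ⟨p, am, false, hp, ham.1, ham.2, ?_⟩
      exact hS.mono_class (fun a' ha' => ⟨ha'.1, by simpa using ha'.2⟩)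
    · obtain ⟨q, hq, hWsub⟩ := hW.root
      refine ⟨q, am, true, hq.1, ham.1, hq.2, ?_⟩
      exact (hWsub false).mono_class (fun a' ha' => ⟨ha'.1.1, by simpa using ha'.2⟩)
  · refine ⟨p, ap, true, hp, hap.1, hap.2, ?_⟩
    exact hS.mono_class (fun a' ha' => ⟨ha'.1, by simpa using ha'.2⟩)

/-- Depth budget for the chain. -/
def chainDepth : ℕ → ℕ
  | 0 => 0
  | r + 1 => 2 * chainDepth r + 3

theorem STree.chain {R : α → β → Bool} :
    ∀ (r : ℕ) (C : α → Prop) (P : β → Prop) (b₀ : β) (a₀ : α),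
    STree R C P (chainDepth r) →
    ∃ (x : ℕ → β) (a : ℕ → α) (v : ℕ → Bool),
      (∀ i, i < r → P (x i) ∧ C (a i)) ∧
      (∀ i j, i ≤ j → j < r → R (a i) (x j) = v i) ∧
      (∀ i j, i < j → j < r → R (a j) (x i) = !(v i)) := by
  intro r
  induction r with
  | zero =>
    intro C P b₀ a₀ _
    exact ⟨fun _ => b₀, fun _ => a₀, fun _ => true,
      fun i hi => absurd hi (by omega), fun i j _ hj => absurd hj (by omega),
      fun i j _ hj => absurd hj (by omega)⟩
  | succ r ih =>
    intro C P b₀ a₀ h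
    obtain ⟨x₀, g₀, v₀, hPx, hCg, hRv, hres⟩ := STree.step (m := chainDepth r) h
    obtain ⟨x, a, v, h1, h2, h3⟩ := ih _ _ x₀ g₀ hres
    refine ⟨fun i => if i = 0 then x₀ else x (i - 1),
            fun i => if i = 0 then g₀ else a (i - 1),
            fun i => if i = 0 then v₀ else v (i - 1), ?_, ?_, ?_⟩
    · intro i hi
      rcases Nat.eq_zero_or_pos i with h0 | h0
      · subst h0; simpa using ⟨hPx, hCg⟩
      · have hi' : i - 1 < r := by omega
        have := h1 (i - 1) hi'
        simp only [if_neg (by omega : ¬ i = 0)]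
        exact ⟨this.1.1, (this.2).1⟩
    · intro i j hij hj
      rcases Nat.eq_zero_or_pos i with h0 | h0
      · subst h0
        simp only [if_pos rfl]
        rcases Nat.eq_zero_or_pos j with hj0 | hj0
        · subst hj0; simpa using hRv
        · simp only [if_neg (by omega : ¬ j = 0)]
          exact (h1 (j - 1) (by omega)).1.2
      · simp only [if_neg (by omega : ¬ i = 0), if_neg (by omega : ¬ j = 0)]
        exact h2 (i - 1) (j - 1) (by omega) (by omega)
    · intro i j hij hj
      rcases Nat.eq_zero_or_pos i with h0 | h0
      · subst h0
        simp only [if_pos rfl, if_neg (by omega : ¬ j = 0)]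
        exact (h1 (j - 1) (by omega)).2.2
      · simp only [if_neg (by omega : ¬ i = 0), if_neg (by omega : ¬ j = 0)]
        exact h3 (i - 1) (j - 1) (by omega) (by omega)

/-- From unbounded shattering, increasing thresholds of every length. -/
theorem exists_inc {R : α → β → Bool} {C : α → Prop} {P : β → Prop}
    (hS : ∀ n, STree R C P n) (k : ℕ) :
    ∃ (x : Fin k → β) (a : Fin k → α),
      (∀ j, P (x j)) ∧ (∀ i, C (a i)) ∧
      ∀ i j : Fin k, R (a i) (x j) = decide ((i : ℕ) ≤ (j : ℕ)) := by
  rcases Nat.eq_zero_or_pos k with hk | hk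
  · subst hk
    exact ⟨Fin.elim0, Fin.elim0, fun j => j.elim0, fun i => i.elim0, fun i => i.elim0⟩
  obtain ⟨b₀, _, _⟩ := (hS 1).root
  obtain ⟨a₀, _⟩ := (hS 0).nonempty
  set r : ℕ := 2 * (k + 1) + 1 with hr
  obtain ⟨x, a, v, h1, h2, h3⟩ := STree.chain r C P b₀ a₀ (hS _)
  have hsplit : k + 1 ≤ ((Finset.range r).filter (fun i => v i = true)).card ∨
      k + 1 ≤ ((Finset.range r).filter (fun i => ¬ (v i = true))).card := by
    by_contra hcon
    push_neg at hcon
    have hadd := Finset.card_filter_add_card_filter_not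
      (s := Finset.range r) (p := fun i => v i = true)
    simp only [Finset.card_range] at hadd
    simp only [ne_eq] at hcon
    omega
  rcases hsplit with hbig | hbig
  · obtain ⟨t, hts, htc⟩ := Finset.exists_subset_card_eq hbig
    set e := t.orderEmbOfFin htc with he
    have hmem : ∀ m : Fin (k + 1), v (e m) = true ∧ e m < r := by
      intro m
      have : e m ∈ t := t.orderEmbOfFin_mem htc m
      have := hts this
      simp only [Finset.mem_filter, Finset.mem_range] at this
      exact ⟨this.2, this.1⟩
    refine ⟨fun j => x (e (Fin.castSucc j)), fun i => a (e (Fin.castSucc i)), ?_, ?_, ?_⟩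
    · intro j; exact (h1 _ (hmem _).2).1
    · intro i; exact (h1 _ (hmem _).2).2
    · intro i j
      by_cases hij : (i : ℕ) ≤ (j : ℕ)
      · have hee : e (Fin.castSucc i) ≤ e (Fin.castSucc j) := by
          apply e.monotone
          rw [Fin.le_def, Fin.coe_castSucc, Fin.coe_castSucc]
          exact hij
        rw [h2 _ _ hee (hmem _).2, (hmem (Fin.castSucc i)).1]
        exact (decide_eq_true hij).symm
      · have hee : e (Fin.castSucc j) < e (Fin.castSucc i) := by
          apply e.strictMono
          simp only [Fin.lt_def, Fin.coe_castSucc]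
          omega
        rw [h3 _ _ hee (hmem _).2, (hmem (Fin.castSucc j)).1]
        simp only [Bool.not_true]
        exact (decide_eq_false hij).symm
  · obtain ⟨t, hts, htc⟩ := Finset.exists_subset_card_eq hbig
    set e := t.orderEmbOfFin htc with he
    have hmem : ∀ m : Fin (k + 1), v (e m) = false ∧ e m < r := by
      intro m
      have : e m ∈ t := t.orderEmbOfFin_mem htc m
      have := hts this
      simp only [Finset.mem_filter, Finset.mem_range, Bool.not_eq_true] at this
      exact ⟨this.2, this.1⟩
    refine ⟨fun j => x (e ⟨k - 1 - (j : ℕ), by omega⟩),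
            fun i => a (e ⟨k - (i : ℕ), by omega⟩), ?_, ?_, ?_⟩
    · intro j; exact (h1 _ (hmem _).2).1
    · intro i; exact (h1 _ (hmem _).2).2
    · intro i j
      have hik : (i : ℕ) ≤ k - 1 := by omega
      have hjk : (j : ℕ) ≤ k - 1 := by omega
      by_cases hij : (i : ℕ) ≤ (j : ℕ)
      · have hee : e ⟨k - 1 - (j : ℕ), by omega⟩ < e ⟨k - (i : ℕ), by omega⟩ := by
          apply e.strictMono
          simp only [Fin.lt_def]
          omega
        rw [h3 _ _ hee (hmem _).2, (hmem ⟨k - 1 - (j : ℕ), by omega⟩).1]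
        simp only [Bool.not_false]
        exact (decide_eq_true hij).symm
      · have hee : e ⟨k - (i : ℕ), by omega⟩ ≤ e ⟨k - 1 - (j : ℕ), by omega⟩ := by
          apply e.monotone
          simp only [Fin.le_def]
          omega
        rw [h2 _ _ hee (hmem _).2, (hmem ⟨k - (i : ℕ), by omega⟩).1]
        exact (decide_eq_false hij).symm

/-- (MSB-first) value of a bit string. -/
def bval (s : List Bool) : ℕ := s.foldl (fun acc b => 2 * acc + b.toNat) 0

theorem bval_foldl (u : List Bool) : ∀ acc : ℕ,
    u.foldl (fun acc b => 2 * acc + b.toNat) acc = acc * 2 ^ u.length + bval u := by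
  induction u with
  | nil => intro acc; simp [bval]
  | cons b u ih =>
    intro acc
    show u.foldl _ (2 * acc + b.toNat) = _
    rw [ih (2 * acc + b.toNat)]
    have hb : bval (b :: u) = b.toNat * 2 ^ u.length + bval u := by
      show u.foldl _ (2 * 0 + b.toNat) = _
      rw [ih (2 * 0 + b.toNat)]
      ring
    rw [hb]
    simp [List.length_cons, pow_succ]
    ring

theorem bval_cons (b : Bool) (u : List Bool) :
    bval (b :: u) = b.toNat * 2 ^ u.length + bval u := by
  show u.foldl _ (2 * 0 + b.toNat) = _
  rw [bval_foldl]
  ring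

theorem bval_append (s u : List Bool) :
    bval (s ++ u) = bval s * 2 ^ u.length + bval u := by
  unfold bval
  rw [List.foldl_append, bval_foldl]
  rfl

theorem bval_lt (u : List Bool) : bval u < 2 ^ u.length := by
  induction u with
  | nil => simp [bval]
  | cons b u ih =>
    rw [bval_cons]
    simp only [List.length_cons, pow_succ]
    cases b <;> simp <;> omega

def nodeIdx (n l v : ℕ) : ℕ := 2 ^ n - 1 - (v * 2 ^ (n - l) + 2 ^ (n - l - 1))

theorem nodeIdx_lt (n l v : ℕ) : nodeIdx n l v < 2 ^ n := by
  have h0 : 0 < 2 ^ n := pow_pos (by norm_num) n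
  exact lt_of_le_of_lt (Nat.sub_le _ _) (Nat.sub_lt h0 one_pos)

/-- Binary search: an increasing threshold of length `2^n` yields a shattered tree
of depth `n`. -/
theorem STree.of_inc {R : α → β → Bool} {C : α → Prop} {P : β → Prop} {n : ℕ}
    (x : Fin (2 ^ n) → β) (a : Fin (2 ^ n) → α)
    (hx : ∀ j, P (x j)) (ha : ∀ i, C (a i))
    (hpat : ∀ i j, R (a i) (x j) = decide ((i : ℕ) ≤ (j : ℕ))) :
    STree R C P n := by
  refine ⟨fun s => x ⟨nodeIdx n s.length (bval s), nodeIdx_lt _ _ _⟩, fun s _ => hx _,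
    fun y hy => ?_⟩
  have hylt : bval y < 2 ^ n := by rw [← hy]; exact bval_lt y
  refine ⟨a ⟨2 ^ n - 1 - bval y, by have : 0 < 2 ^ n := pow_pos (by norm_num) n; omega⟩, ha _,
    fun i => ?_⟩
  rw [hpat]
  have hiy : (i : ℕ) < n := by rw [← hy]; exact i.isLt
  have hlen : (y.take (i : ℕ)).length = (i : ℕ) := by
    rw [List.length_take]; omega
  set l : ℕ := (i : ℕ) with hl
  have hsplit : y.take l ++ y.drop l = y := List.take_append_drop l y
  have hdlen : (y.drop l).length = n - l := by rw [List.length_drop, hy]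
  have hyb : bval y = bval (y.take l) * 2 ^ (n - l) + bval (y.drop l) := by
    conv_lhs => rw [← hsplit]
    rw [bval_append, hdlen]
  have hldrop : y.drop l = y.get i :: y.drop (l + 1) := by
    have h1 : l < y.length := by omega
    rw [List.drop_eq_getElem_cons h1]
    rfl
  have hdd : bval (y.drop l) = (y.get i).toNat * 2 ^ (n - l - 1) + bval (y.drop (l + 1)) := by
    rw [hldrop, bval_cons, List.length_drop, hy, Nat.sub_sub]
  have hddlt : bval (y.drop (l + 1)) < 2 ^ (n - l - 1) := by
    have := bval_lt (y.drop (l + 1))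
    rwa [List.length_drop, hy, show n - (l+1) = n - l - 1 by omega] at this
  have htake : bval (y.take l) + 1 ≤ 2 ^ l := by
    have := bval_lt (y.take l)
    rw [hlen] at this; omega
  have hM2 : 2 ^ (n - l) = 2 ^ (n - l - 1) * 2 := by
    rw [← pow_succ]
    congr 1
    omega
  set M : ℕ := 2 ^ (n - l - 1) with hM
  have hM1 : 0 < M := pow_pos (by norm_num) _
  set w : ℕ := bval (y.take l) * M with hw
  have hyb' : bval y = 2 * w + bval (y.drop l) := by
    rw [hyb, hM2, hw]; ring
  have hwbound : 2 * w + 2 * M ≤ 2 ^ n := by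
    have : (bval (y.take l) + 1) * 2 ^ (n - l) ≤ 2 ^ l * 2 ^ (n - l) :=
      Nat.mul_le_mul_right _ htake
    rw [← pow_add] at this
    have hnl : l + (n - l) = n := by omega
    rw [hnl] at this
    rw [hM2] at this
    calc 2 * w + 2 * M = (bval (y.take l) + 1) * (M * 2) := by rw [hw]; ring
    _ ≤ 2 ^ n := this
  have hnodeIdx : nodeIdx n (y.take l).length (bval (y.take l)) = 2 ^ n - 1 - (2 * w + M) := by
    unfold nodeIdx
    rw [hlen, hM2, hw]
    congr 2
    ring
  simp only [hnodeIdx]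
  have hdq : bval (y.drop l) = (y.get i).toNat * M + bval (y.drop (l + 1)) := hdd
  cases hgi : y.get i
  · simp only [hgi, Bool.toNat_false, zero_mul, zero_add] at hdq
    apply decide_eq_false
    intro hle
    omega
  · simp only [hgi, Bool.toNat_true, one_mul] at hdq
    apply decide_eq_true
    omega

/-- The recursive construction of a good subset, assuming no deep shattered tree. -/
theorem exists_good {R : α → β → Bool} {P : β → Prop} {ε : ℝ} (hε0 : 0 < ε) (hε1 : ε ≤ 1) :
    ∀ (d : ℕ) (A : Finset α), A.Nonempty →
    ¬ STree R (fun a => a ∈ A) P (d + 1) →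
    ∃ B ⊆ A, ε ^ d * A.card ≤ (B.card : ℝ) ∧
      ∀ p : β, P p → ((B.filter fun a => R a p = true).card : ℝ) < ε * B.card ∨
               ((B.filter fun a => R a p = false).card : ℝ) < ε * B.card := by
  intro d
  induction d with
  | zero =>
    intro A hAne hAtree
    refine ⟨A, subset_rfl, by simp, fun p hPp => ?_⟩
    by_contra hcon
    push_neg at hcon
    obtain ⟨h1, h0⟩ := hcon
    have hApos : (0 : ℝ) < ε * A.card := by
      have : 0 < A.card := Finset.card_pos.mpr hAne
      positivity
    have hf1 : ∃ a, a ∈ A ∧ R a p = true := by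
      have hr : (0:ℝ) < ((A.filter fun a => R a p = true).card : ℝ) := lt_of_lt_of_le hApos h1
      have : 0 < (A.filter fun a => R a p = true).card := by exact_mod_cast hr
      obtain ⟨a, ha⟩ := Finset.card_pos.mp this
      simp only [Finset.mem_filter] at ha
      exact ⟨a, ha⟩
    have hf0 : ∃ a, a ∈ A ∧ R a p = false := by
      have hr : (0:ℝ) < ((A.filter fun a => R a p = false).card : ℝ) := lt_of_lt_of_le hApos h0
      have : 0 < (A.filter fun a => R a p = false).card := by exact_mod_cast hr
      obtain ⟨a, ha⟩ := Finset.card_pos.mp this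
      simp only [Finset.mem_filter] at ha
      exact ⟨a, ha⟩
    exact hAtree (STree.one p hPp hf0 hf1)
  | succ d ih =>
    intro A hAne hAtree
    by_cases hgood : ∀ p : β, P p → ((A.filter fun a => R a p = true).card : ℝ) < ε * A.card ∨
               ((A.filter fun a => R a p = false).card : ℝ) < ε * A.card
    · refine ⟨A, subset_rfl, ?_, hgood⟩
      have h1 : ε ^ (d + 1) ≤ 1 := pow_le_one₀ hε0.le hε1
      have h2 : (0:ℝ) ≤ (A.card : ℝ) := Nat.cast_nonneg _
      nlinarith
    · push_neg at hgood
      obtain ⟨p, hPp, hp1, hp0⟩ := hgood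
      set A₁ := A.filter (fun a => R a p = true) with hA1
      set A₀ := A.filter (fun a => R a p = false) with hA0
      have hApos : (0 : ℝ) < ε * A.card := by
        have : 0 < A.card := Finset.card_pos.mpr hAne
        positivity
      have hA1ne : A₁.Nonempty := by
        rw [← Finset.card_pos]
        have hr : (0:ℝ) < (A₁.card : ℝ) := lt_of_lt_of_le hApos hp1
        exact_mod_cast hr
      have hA0ne : A₀.Nonempty := by
        rw [← Finset.card_pos]
        have hr : (0:ℝ) < (A₀.card : ℝ) := lt_of_lt_of_le hApos hp0
        exact_mod_cast hr
      have hkey : ¬ STree R (fun a => a ∈ A₀) P (d + 1) ∨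
          ¬ STree R (fun a => a ∈ A₁) P (d + 1) := by
        by_contra hcon
        push_neg at hcon
        apply hAtree
        apply STree.glue (p := p) hPp
        · exact hcon.1.mono_class (fun a ha => by
            rw [hA0] at ha; simp only [Finset.mem_filter] at ha; exact ha)
        · exact hcon.2.mono_class (fun a ha => by
            rw [hA1] at ha; simp only [Finset.mem_filter] at ha; exact ha)
      have main : ∀ Ab : Finset α, Ab ⊆ A → ε * A.card ≤ (Ab.card : ℝ) → Ab.Nonempty →
          ¬ STree R (fun a => a ∈ Ab) P (d + 1) →
          ∃ B ⊆ A, ε ^ (d+1) * A.card ≤ (B.card : ℝ) ∧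
          ∀ p : β, P p → ((B.filter fun a => R a p = true).card : ℝ) < ε * B.card ∨
               ((B.filter fun a => R a p = false).card : ℝ) < ε * B.card := by
        intro Ab hsub hcard hne htree
        obtain ⟨B, hBsub, hBcard, hBgood⟩ := ih Ab hne htree
        refine ⟨B, hBsub.trans hsub, ?_, hBgood⟩
        calc ε ^ (d+1) * A.card = ε ^ d * (ε * A.card) := by ring
        _ ≤ ε ^ d * Ab.card := by
            apply mul_le_mul_of_nonneg_left hcard (by positivity)
        _ ≤ (B.card : ℝ) := hBcard
      rcases hkey with hk | hk
      · exact main A₀ (Finset.filter_subset _ _) hp0 hA0ne hk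
      · exact main A₁ (Finset.filter_subset _ _) hp1 hA1ne hk

/-- cardinality of an initial segment filter in `Fin m` -/
theorem card_filter_lt_fin (m q : ℕ) (hq : q ≤ m) :
    (Finset.univ.filter (fun l : Fin m => (l : ℕ) < q)).card = q := by
  have key : (Finset.univ.filter (fun l : Fin m => (l : ℕ) < q)).card = (Finset.range q).card := by
    refine Finset.card_bij (fun (l : Fin m) (_ : l ∈ Finset.univ.filter (fun l : Fin m => (l : ℕ) < q)) => (l : ℕ)) ?_ ?_ ?_
    · intro l hl
      simp only [Finset.mem_filter] at hl
      simp [hl.2]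
    · intro l hl l' hl' h
      exact Fin.ext h
    · intro t ht
      simp only [Finset.mem_range] at ht
      exact ⟨⟨t, by omega⟩, by simp [ht], rfl⟩
  rw [key, Finset.card_range]

/-- The median-cut argument: a threshold family defeats ε-goodness of all its large subsets. -/
theorem defeat {R : α → β → Bool} {k : ℕ} (x : Fin k → β) (a : Fin k → α)
    (hpat : ∀ i j, R (a i) (x j) = decide ((i : ℕ) ≤ (j : ℕ)))
    {ε c : ℝ} (hε0 : 0 < ε) (hε : ε < 1/2) (hc : 0 < c)
    (hck : 1 ≤ c * k * (1 - 2*ε)) :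
    ∀ B ⊆ Finset.image a Finset.univ, c * ((Finset.image a Finset.univ).card : ℝ) ≤ (B.card : ℝ) →
      ∃ j : Fin k, ε * B.card ≤ ((B.filter fun h => R h (x j) = true).card : ℝ) ∧
                   ε * B.card ≤ ((B.filter fun h => R h (x j) = false).card : ℝ) := by
  intro B hBsub hBcard
  have hainj : Function.Injective a := by
    intro i i' h
    by_contra hne
    have hne' : i ≠ i' := hne
    rcases lt_or_gt_of_ne hne' with hlt | hlt
    · have h1 := hpat i i
      have h2 := hpat i' i
      rw [h] at h1
      rw [h1] at h2
      simp only [decide_eq_decide] at h2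
      have : (i:ℕ) < i' := hlt
      omega
    · have h1 := hpat i' i'
      have h2 := hpat i i'
      rw [← h] at h1
      rw [h1] at h2
      simp only [decide_eq_decide] at h2
      have : (i':ℕ) < i := hlt
      omega
  have hAcard : (Finset.image a Finset.univ).card = k := by
    rw [Finset.card_image_of_injective _ hainj, Finset.card_univ, Fintype.card_fin]
  set I : Finset (Fin k) := Finset.univ.filter (fun i => a i ∈ B) with hI
  have hBI : B = I.image a := by
    ext b
    constructor
    · intro hb
      obtain ⟨i, _, hib⟩ := Finset.mem_image.mp (hBsub hb)
      exact Finset.mem_image.mpr ⟨i, by simp [hI, hib ▸ hb], hib⟩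
    · intro hb
      obtain ⟨i, hi, hib⟩ := Finset.mem_image.mp hb
      simp only [hI, Finset.mem_filter] at hi
      exact hib ▸ hi.2
  set m : ℕ := B.card with hm
  have hIcard : I.card = m := by
    rw [hm, hBI, Finset.card_image_of_injective _ hainj]
  have hmck : c * k ≤ (m : ℝ) := by
    rw [hm]
    calc c * (k:ℝ) = c * ((Finset.image a Finset.univ).card : ℝ) := by rw [hAcard]
    _ ≤ (B.card : ℝ) := hBcard
  have h2e : (0:ℝ) < 1 - 2*ε := by linarith
  have hm1R : (1:ℝ) ≤ m * (1 - 2*ε) := by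
    calc (1:ℝ) ≤ c * k * (1 - 2*ε) := hck
    _ ≤ m * (1 - 2*ε) := by
        apply mul_le_mul_of_nonneg_right hmck h2e.le
  have hmpos : 0 < m := by
    by_contra hz
    push_neg at hz
    have : m = 0 := by omega
    rw [this] at hm1R
    norm_num at hm1R
  set q : ℕ := m - m / 2 with hq
  have hq1 : 1 ≤ q := by omega
  have hqm : q ≤ m := by omega
  set e := I.orderEmbOfFin hIcard with he
  set jstar : Fin k := e ⟨q - 1, by omega⟩ with hjstar
  have hmemI : ∀ l : Fin m, e l ∈ I := fun l => I.orderEmbOfFin_mem hIcard l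
  have hIinv : ∀ i ∈ I, ∃ l : Fin m, e l = i := by
    intro i hi
    have h1 : (i : Fin k) ∈ (I : Set (Fin k)) := hi
    rw [← Finset.range_orderEmbOfFin I hIcard] at h1
    obtain ⟨l, hl⟩ := h1
    exact ⟨l, hl⟩
  have hfilt : B.filter (fun h => R h (x jstar) = true)
      = (I.filter (fun i => i ≤ jstar)).image a := by
    ext b
    simp only [Finset.mem_filter, Finset.mem_image]
    constructor
    · rintro ⟨hb, hRb⟩
      rw [hBI] at hb
      obtain ⟨i, hi, hib⟩ := Finset.mem_image.mp hb
      refine ⟨i, ⟨hi, ?_⟩, hib⟩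
      rw [← hib] at hRb
      rw [hpat] at hRb
      have := of_decide_eq_true hRb
      exact Fin.le_def.mpr this
    · rintro ⟨i, ⟨hi, hile⟩, hib⟩
      constructor
      · rw [hBI]
        exact Finset.mem_image.mpr ⟨i, hi, hib⟩
      · rw [← hib, hpat]
        exact decide_eq_true (Fin.le_def.mp hile)
  have hseg : I.filter (fun i => i ≤ jstar)
      = (Finset.univ.filter (fun l : Fin m => (l : ℕ) < q)).image e := by
    ext i
    simp only [Finset.mem_filter, Finset.mem_image]
    constructor
    · rintro ⟨hi, hile⟩
      obtain ⟨l, hl⟩ := hIinv i hi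
      refine ⟨l, ⟨Finset.mem_univ _, ?_⟩, hl⟩
      rw [← hl] at hile
      have hlle : l ≤ (⟨q - 1, by omega⟩ : Fin m) := (OrderEmbedding.le_iff_le e).mp hile
      have := Fin.le_def.mp hlle
      simp at this
      omega
    · rintro ⟨l, ⟨_, hlq⟩, hl⟩
      refine ⟨hl ▸ hmemI l, ?_⟩
      rw [← hl]
      apply e.monotone
      apply Fin.le_def.mpr
      simp
      omega
  have hcount : (B.filter (fun h => R h (x jstar) = true)).card = q := by
    rw [hfilt, Finset.card_image_of_injective _ hainj, hseg,
      Finset.card_image_of_injective _ (e.injective), card_filter_lt_fin m q hqm]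
  have hpart : (B.filter (fun h => R h (x jstar) = true)).card
      + (B.filter (fun h => R h (x jstar) = false)).card = m := by
    have hpc : ∀ h ∈ B, (R h (x jstar) = false) ↔ ¬ (R h (x jstar) = true) := by
      intro h _
      cases hrv : R h (x jstar) <;> simp
    have heq : B.filter (fun h => R h (x jstar) = false)
        = B.filter (fun h => ¬ (R h (x jstar) = true)) := Finset.filter_congr hpc
    rw [heq, hm, Finset.card_filter_add_card_filter_not]
  have hcount2 : (B.filter (fun h => R h (x jstar) = false)).card = m - q := by omega
  refine ⟨jstar, ?_, ?_⟩
  · rw [hcount]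
    have hfq : (m / 2 : ℕ) ≤ (m:ℝ) / 2 := by
      have h1 : 2 * (m / 2 : ℕ) ≤ m := by omega
      have : ((2 * (m / 2 : ℕ) : ℕ) : ℝ) ≤ (m : ℝ) := by exact_mod_cast h1
      push_cast at this
      linarith
    have hqlow : (m:ℝ) / 2 ≤ (q:ℝ) := by
      have : ((q:ℕ):ℝ) = (m:ℝ) - ((m/2 : ℕ):ℝ) := by
        rw [hq]
        have : (m / 2 : ℕ) ≤ m := by omega
        push_cast [Nat.cast_sub this]
        ring
      rw [this]
      linarith
    calc ε * (m:ℝ) ≤ (m:ℝ)/2 := by nlinarith [Nat.cast_nonneg (α := ℝ) m]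
    _ ≤ (q:ℝ) := hqlow
  · rw [hcount2]
    have : ((m - q : ℕ) : ℝ) = (m:ℝ) - (q:ℝ) := by
      rw [Nat.cast_sub hqm]
    rw [this]
    have hqup : (q:ℝ) ≤ ((m:ℝ) + 1) / 2 := by
      have h1 : 2 * q ≤ m + 1 := by omega
      have : ((2 * q : ℕ) : ℝ) ≤ ((m + 1 : ℕ) : ℝ) := by exact_mod_cast h1
      push_cast at this
      linarith
    nlinarith [Nat.cast_nonneg (α := ℝ) m]

end Abstract

section Bridge

variable {X : Type*} {H : Set (X → Bool)}

theorem shatters_iff_stree {n : ℕ} :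
    Shatters H n ↔ STree (fun (h : X → Bool) (x : X) => h x) (fun h => h ∈ H)
      (fun _ : X => True) n := by
  constructor
  · rintro ⟨t, ht⟩
    refine ⟨t, fun _ _ => trivial, fun y hy => ?_⟩
    obtain ⟨h, hh, hr⟩ := ht y hy
    exact ⟨h, hh, hr⟩
  · rintro ⟨t, _, ht⟩
    refine ⟨t, fun y hy => ?_⟩
    obtain ⟨h, hh, hr⟩ := ht y hy
    exact ⟨h, hh, hr⟩

theorem shatters_mono {m n : ℕ} (hmn : m ≤ n) (h : Shatters H n) : Shatters H m :=
  shatters_iff_stree.mpr ((shatters_iff_stree.mp h).mono_depth hmn)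

theorem ldim_ne_top_of_not_shatters {N : ℕ} (h : ¬ Shatters H N) : Ldim H ≠ ⊤ := by
  intro htop
  have hsup : Ldim H ≤ ((N : ℕ∞) : WithBot ℕ∞) := by
    apply sSup_le
    rintro d ⟨n, hs, rfl⟩
    have hn : n ≤ N := by
      by_contra hc
      push_neg at hc
      exact h (shatters_mono hc.le hs)
    exact WithBot.coe_le_coe.mpr (Nat.cast_le.mpr hn)
  rw [htop] at hsup
  have hne : ((N : ℕ∞) : WithBot ℕ∞) ≠ ⊤ := by
    simp only [ne_eq, WithBot.coe_eq_top]
    exact ENat.coe_ne_top N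
  exact hne (top_le_iff.mp hsup)

theorem ldim_eq_top_of_shatters (h : ∀ n : ℕ, Shatters H n) : Ldim H = ⊤ := by
  have h1 : ∀ n : ℕ, ((n : ℕ∞) : WithBot ℕ∞) ≤ Ldim H := by
    intro n
    exact le_sSup ⟨n, h n, rfl⟩
  set z := Ldim H with hz
  clear_value z
  rcases hL : z with _ | e
  · have := h1 0
    rw [hL] at this
    exact absurd this (WithBot.not_coe_le_bot _)
  · rcases eq_or_ne e ⊤ with rfl | he
    · rfl
    · obtain ⟨m, rfl⟩ := WithTop.ne_top_iff_exists.mp he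
      have := h1 (m + 1)
      rw [hL] at this
      
      have h2 : ((m + 1 : ℕ) : ℕ∞) ≤ ((m : ℕ) : ℕ∞) := WithBot.coe_le_coe.mp this
      have h3 : (m + 1 : ℕ) ≤ m := Nat.cast_le.mp h2
      omega

end Bridge


section Main

variable {X : Type*} {H : Set (X → Bool)}

theorem impl_3_to_1 (h3 : Ldim H ≠ ⊤) :
    ∀ ε : ℝ, 0 < ε → ε < 1/2 → ∃ c : ℝ, 0 < c ∧
      ∀ A : Finset (X → Bool), ↑A ⊆ H → A.Nonempty →
        ∃ B ⊆ A, c * A.card ≤ (B.card : ℝ) ∧ EpsGoodH ε B := by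
  intro ε hε0 hε2
  have hNex : ∃ N, ¬ Shatters H N := by
    by_contra hc
    push_neg at hc
    exact h3 (ldim_eq_top_of_shatters hc)
  obtain ⟨N, hN⟩ := hNex
  refine ⟨ε ^ N, by positivity, ?_⟩
  intro A hAH hAne
  have htree : ¬ STree (fun (h : X → Bool) (x : X) => h x) (fun a => a ∈ A)
      (fun _ : X => True) (N + 1) := by
    intro ht
    exact hN (shatters_iff_stree.mpr
      ((ht.mono_class (fun a ha => hAH (Finset.mem_coe.mpr ha))).mono_depth (Nat.le_succ N)))
  obtain ⟨B, hBA, hBc, hBg⟩ := exists_good hε0 (by linarith) N A hAne htree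
  exact ⟨B, hBA, hBc, fun x => hBg x trivial⟩

theorem impl_3_to_4 (h3 : Ldim H ≠ ⊤) :
    ∀ ε : ℝ, 0 < ε → ε < 1/2 → ∃ c : ℝ, 0 < c ∧
      ∀ A : Finset X, A.Nonempty →
        ∃ B ⊆ A, c * A.card ≤ (B.card : ℝ) ∧ EpsGoodX H ε B := by
  have hNex : ∃ N, ¬ Shatters H N := by
    by_contra hc
    push_neg at hc
    exact h3 (ldim_eq_top_of_shatters hc)
  obtain ⟨N, hN⟩ := hNex
  have hD : ∃ D, ¬ STree (fun (x : X) (h : X → Bool) => h x) (fun _ : X => True)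
      (fun h => h ∈ H) D := by
    by_contra hcon
    push_neg at hcon
    obtain ⟨x, a, hxH, -, hpat⟩ := exists_inc hcon (2 ^ N + 1)
    apply hN
    apply shatters_iff_stree.mpr
    refine STree.of_inc (fun w : Fin (2 ^ N) => a ⟨2 ^ N - (w : ℕ), by omega⟩)
      (fun u : Fin (2 ^ N) => x ⟨2 ^ N - (u : ℕ), by omega⟩)
      (fun j => trivial) (fun i => hxH _) ?_
    intro u w
    have hw := w.isLt
    have hu := u.isLt
    have h1 := hpat ⟨2 ^ N - (w : ℕ), by omega⟩ ⟨2 ^ N - (u : ℕ), by omega⟩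
    have h2 : (decide (2 ^ N - (w : ℕ) ≤ 2 ^ N - (u : ℕ)) : Bool)
        = decide ((u : ℕ) ≤ (w : ℕ)) := by
      apply decide_eq_decide.mpr
      omega
    rw [h2] at h1
    exact h1
  obtain ⟨D, hD⟩ := hD
  intro ε hε0 hε2
  refine ⟨ε ^ D, by positivity, ?_⟩
  intro A hAne
  have htree : ¬ STree (fun (x : X) (h : X → Bool) => h x) (fun a => a ∈ A)
      (fun h => h ∈ H) (D + 1) := by
    intro ht
    exact hD ((ht.mono_class (fun _ _ => trivial)).mono_depth (Nat.le_succ D))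
  obtain ⟨B, hBA, hBc, hBg⟩ := exists_good hε0 (by linarith) D A hAne htree
  exact ⟨B, hBA, hBc, fun h hh => hBg h hh⟩

theorem impl_2_to_3
    (h2 : ∃ ε : ℝ, 0 < ε ∧ ε < 1/2 ∧ ∃ c : ℝ, 0 < c ∧
      ∀ A : Finset (X → Bool), ↑A ⊆ H → A.Nonempty →
        ∃ B ⊆ A, c * A.card ≤ (B.card : ℝ) ∧ EpsGoodH ε B) :
    Ldim H ≠ ⊤ := by
  intro htop
  have hshat : ∀ n, Shatters H n := by
    intro n
    by_contra hs
    exact ldim_ne_top_of_not_shatters hs htop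
  have hstree : ∀ n, STree (fun (h : X → Bool) (x : X) => h x) (fun h => h ∈ H)
      (fun _ : X => True) n := fun n => shatters_iff_stree.mp (hshat n)
  obtain ⟨ε, hε0, hε2, c, hc, hprop⟩ := h2
  have h2e : (0:ℝ) < 1 - 2*ε := by linarith
  obtain ⟨k, hk⟩ := exists_nat_ge (1 / (c * (1 - 2*ε)))
  have hck : 1 ≤ c * k * (1 - 2*ε) := by
    have hpos : (0:ℝ) < c * (1-2*ε) := by positivity
    rw [div_le_iff₀ hpos] at hk
    calc (1:ℝ) ≤ k * (c * (1 - 2*ε)) := hk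
    _ = c * k * (1 - 2*ε) := by ring
  obtain ⟨x, a, hxP, haC, hpat⟩ := exists_inc hstree k
  have hk0 : 0 < k := by
    by_contra hz
    push_neg at hz
    have : k = 0 := by omega
    rw [this] at hck
    norm_num at hck
  set A := Finset.image a Finset.univ with hA
  have hAH : ↑A ⊆ H := by
    intro h hh
    simp only [hA, Finset.coe_image, Set.mem_image] at hh
    obtain ⟨i, -, rfl⟩ := hh
    exact haC i
  have hAne : A.Nonempty := ⟨a ⟨0, hk0⟩, Finset.mem_image_of_mem _ (Finset.mem_univ _)⟩
  obtain ⟨B, hBA, hBc, hBg⟩ := hprop A hAH hAne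
  obtain ⟨j, hj1, hj2⟩ := defeat (R := fun (h : X → Bool) (x : X) => h x) x a hpat hε0 hε2 hc hck B hBA hBc
  rcases hBg (x j) with hlt | hlt
  · exact absurd hj1 (not_le.mpr hlt)
  · exact absurd hj2 (not_le.mpr hlt)

theorem impl_5_to_3
    (h5 : ∃ ε : ℝ, 0 < ε ∧ ε < 1/2 ∧ ∃ c : ℝ, 0 < c ∧
      ∀ A : Finset X, A.Nonempty →
        ∃ B ⊆ A, c * A.card ≤ (B.card : ℝ) ∧ EpsGoodX H ε B) :
    Ldim H ≠ ⊤ := by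
  intro htop
  have hshat : ∀ n, Shatters H n := by
    intro n
    by_contra hs
    exact ldim_ne_top_of_not_shatters hs htop
  have hstree : ∀ n, STree (fun (h : X → Bool) (x : X) => h x) (fun h => h ∈ H)
      (fun _ : X => True) n := fun n => shatters_iff_stree.mp (hshat n)
  obtain ⟨ε, hε0, hε2, c, hc, hprop⟩ := h5
  have h2e : (0:ℝ) < 1 - 2*ε := by linarith
  obtain ⟨m, hm⟩ := exists_nat_ge (1 / (c * (1 - 2*ε)))
  have hck : 1 ≤ c * m * (1 - 2*ε) := by
    have hpos : (0:ℝ) < c * (1-2*ε) := by positivity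
    rw [div_le_iff₀ hpos] at hm
    calc (1:ℝ) ≤ m * (c * (1 - 2*ε)) := hm
    _ = c * m * (1 - 2*ε) := by ring
  have hm0 : 0 < m := by
    by_contra hz
    push_neg at hz
    have : m = 0 := by omega
    rw [this] at hck
    norm_num at hck
  obtain ⟨x, a, -, haC, hpat⟩ := exists_inc hstree (m + 1)
  set x' : Fin m → (X → Bool) := fun j => a ⟨m - (j : ℕ), by omega⟩ with hx'
  set a' : Fin m → X := fun i => x ⟨m - (i : ℕ), by omega⟩ with ha'
  have hpat' : ∀ i j : Fin m, (fun (p : X) (h : X → Bool) => h p) (a' i) (x' j)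
      = decide ((i : ℕ) ≤ (j : ℕ)) := by
    intro i j
    have hi := i.isLt
    have hj := j.isLt
    have h1 := hpat ⟨m - (j : ℕ), by omega⟩ ⟨m - (i : ℕ), by omega⟩
    have h2 : (decide (m - (j : ℕ) ≤ m - (i : ℕ)) : Bool)
        = decide ((i : ℕ) ≤ (j : ℕ)) := by
      apply decide_eq_decide.mpr
      omega
    rw [h2] at h1
    exact h1
  set A := Finset.image a' Finset.univ with hA
  have hAne : A.Nonempty := ⟨a' ⟨0, hm0⟩, Finset.mem_image_of_mem _ (Finset.mem_univ _)⟩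
  obtain ⟨B, hBA, hBc, hBg⟩ := hprop A hAne
  obtain ⟨j, hj1, hj2⟩ := defeat (R := fun (p : X) (h : X → Bool) => h p) x' a'
    hpat' hε0 hε2 hc hck B hBA hBc
  have hx'H : x' j ∈ H := haC _
  rcases hBg (x' j) hx'H with hlt | hlt
  · exact absurd hj1 (not_le.mpr hlt)
  · exact absurd hj2 (not_le.mpr hlt)

end Main

/-- existence of large ε-good subsets (on either side) characterizes
Littlestone classes. -/
theorem stmt_0 {X : Type*} (H : Set (X → Bool)) :
    List.TFAE [
      -- (1) for every ε there is c = c(ε) > 0, every finite nonempty A ⊆ H has an ε-good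
      -- subset of size ≥ c|A|
      (∀ ε : ℝ, 0 < ε → ε < 1/2 → ∃ c : ℝ, 0 < c ∧
        ∀ A : Finset (X → Bool), ↑A ⊆ H → A.Nonempty →
          ∃ B ⊆ A, c * A.card ≤ (B.card : ℝ) ∧ EpsGoodH ε B),
      -- (2) for some ε and some c > 0
      (∃ ε : ℝ, 0 < ε ∧ ε < 1/2 ∧ ∃ c : ℝ, 0 < c ∧
        ∀ A : Finset (X → Bool), ↑A ⊆ H → A.Nonempty →
          ∃ B ⊆ A, c * A.card ≤ (B.card : ℝ) ∧ EpsGoodH ε B),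
      -- (3) H is a Littlestone class
      Ldim H ≠ ⊤,
      -- (4) for every ε there is c = c(ε) > 0, every finite nonempty A ⊆ X has an ε-good
      -- subset of size ≥ c|A|
      (∀ ε : ℝ, 0 < ε → ε < 1/2 → ∃ c : ℝ, 0 < c ∧
        ∀ A : Finset X, A.Nonempty →
          ∃ B ⊆ A, c * A.card ≤ (B.card : ℝ) ∧ EpsGoodX H ε B),
      -- (5) for some ε and some c > 0
      (∃ ε : ℝ, 0 < ε ∧ ε < 1/2 ∧ ∃ c : ℝ, 0 < c ∧
        ∀ A : Finset X, A.Nonempty →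
          ∃ B ⊆ A, c * A.card ≤ (B.card : ℝ) ∧ EpsGoodX H ε B)
    ] := by
  tfae_have 1 → 2
  · intro h1
    exact ⟨1/4, by norm_num, by norm_num, h1 (1/4) (by norm_num) (by norm_num)⟩
  tfae_have 4 → 5
  · intro h4
    exact ⟨1/4, by norm_num, by norm_num, h4 (1/4) (by norm_num) (by norm_num)⟩
  tfae_have 2 → 3
  · exact impl_2_to_3
  tfae_have 5 → 3
  · exact impl_5_to_3
  tfae_have 3 → 1
  · exact impl_3_to_1
  tfae_have 3 → 4
  · exact impl_3_to_4
  tfae_finish
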